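/- If every agent's cost function is monotone and subadditive, then every allocation of E among the n agents is 2-PMMS and n-MMS. -/

import Mathlib

open Finset

/-- `T` is a `k`-partition of the bundle `S`: pairwise disjoint bundles whose union is `S`. -/
def IsPartitionOf {E : Type*} [DecidableEq E] {k : ℕ} (T : Fin k → Finset E) (S : Finset E) :
    Prop :=
  (∀ i j : Fin k, i ≠ j → Disjoint (T i) (T j)) ∧ Finset.univ.biUnion T = S

/-- The maximin share of cost function `c` on `S` among `k` agents:
the minimum over `k`-partitions of `S` of the maximum cost of a bundle. -/
noncomputable def MMS {E : Type*} [DecidableEq E] (c : Finset E → ℝ) (k : ℕ) (S : Finset E) :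
    ℝ :=
  sInf { m : ℝ | ∃ T : Fin k → Finset E, IsPartitionOf T S ∧ m = ⨆ j : Fin k, c (T j) }

/-- `c` is a nonnegative additive cost function. -/
def AdditiveCost {E : Type*} [DecidableEq E] (c : Finset E → ℝ) : Prop :=
  (∀ S : Finset E, 0 ≤ c S) ∧ ∀ S : Finset E, c S = ∑ e ∈ S, c {e}

/-- `c` is a nonnegative monotone cost function with `c ∅ = 0`. -/
def MonotoneCost {E : Type*} (c : Finset E → ℝ) : Prop :=
  (∀ S : Finset E, 0 ≤ c S) ∧ c ∅ = 0 ∧ ∀ ⦃S T : Finset E⦄, S ⊆ T → c S ≤ c T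

/-- `c` is subadditive. -/
def SubadditiveCost {E : Type*} [DecidableEq E] (c : Finset E → ℝ) : Prop :=
  ∀ S T : Finset E, c (S ∪ T) ≤ c S + c T

/-- `c` is submodular. -/
def SubmodularCost {E : Type*} [DecidableEq E] (c : Finset E → ℝ) : Prop :=
  ∀ S T : Finset E, c (S ∪ T) + c (S ∩ T) ≤ c S + c T

/-- `A` is an allocation of all chores among the `n` agents. -/
def IsAllocation {E : Type*} [DecidableEq E] [Fintype E] {n : ℕ} (A : Fin n → Finset E) : Prop :=
  IsPartitionOf A Finset.univ

/-- `A` is `α`-envy-free. -/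
def IsEF {E : Type*} {n : ℕ} (α : ℝ) (c : Fin n → Finset E → ℝ) (A : Fin n → Finset E) : Prop :=
  ∀ i j, c i (A i) ≤ α * c i (A j)

/-- `A` is `α`-envy-free up to one item. -/
def IsEF1 {E : Type*} [DecidableEq E] {n : ℕ} (α : ℝ) (c : Fin n → Finset E → ℝ)
    (A : Fin n → Finset E) : Prop :=
  ∀ i j, i ≠ j → A i = ∅ ∨ ∃ e ∈ A i, c i (A i \ {e}) ≤ α * c i (A j)

/-- `A` is `α`-envy-free up to any (positive-cost) item. -/
def IsEFX {E : Type*} [DecidableEq E] {n : ℕ} (α : ℝ) (c : Fin n → Finset E → ℝ)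
    (A : Fin n → Finset E) : Prop :=
  ∀ i j, i ≠ j → ∀ e ∈ A i, 0 < c i {e} → c i (A i \ {e}) ≤ α * c i (A j)

/-- `A` is an `α`-MMS allocation. -/
def IsMMSFair {E : Type*} [DecidableEq E] [Fintype E] {n : ℕ} (α : ℝ)
    (c : Fin n → Finset E → ℝ) (A : Fin n → Finset E) : Prop :=
  ∀ i, c i (A i) ≤ α * MMS (c i) n Finset.univ

/-- `A` is an `α`-PMMS allocation. -/
def IsPMMS {E : Type*} [DecidableEq E] {n : ℕ} (α : ℝ)
    (c : Fin n → Finset E → ℝ) (A : Fin n → Finset E) : Prop :=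
  ∀ i j, i ≠ j → c i (A i) ≤ α * MMS (c i) 2 (A i ∪ A j)

/-- The optimal (minimum) social cost over all allocations. -/
noncomputable def OPT {E : Type*} [DecidableEq E] [Fintype E] {n : ℕ}
    (c : Fin n → Finset E → ℝ) : ℝ :=
  sInf { s : ℝ | ∃ A : Fin n → Finset E, IsAllocation A ∧ s = ∑ i, c i (A i) }


lemma cost_biUnion_le {E ι : Type*} [DecidableEq E] (c : Finset E → ℝ)
    (h0 : c ∅ = 0) (hs : SubadditiveCost c) (s : Finset ι) (T : ι → Finset E) :
    c (s.biUnion T) ≤ ∑ j ∈ s, c (T j) := by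
  classical
  induction s using Finset.induction with
  | empty => simp [h0]
  | @insert a s hx ih =>
    rw [Finset.biUnion_insert, Finset.sum_insert hx]
    exact le_trans (hs _ _) (by linarith)

lemma cost_le_mul_MMS {E : Type*} [DecidableEq E] (c : Finset E → ℝ)
    (hm : MonotoneCost c) (hs : SubadditiveCost c) (k : ℕ) (hk : 0 < k) (S : Finset E) :
    c S ≤ (k : ℝ) * MMS c k S := by
  classical
  have hne : { m : ℝ | ∃ T : Fin k → Finset E, IsPartitionOf T S ∧ m = ⨆ j : Fin k, c (T j) }.Nonempty := by
    refine ⟨_, (fun j : Fin k => if j = ⟨0, hk⟩ then S else ∅), ⟨?_, ?_⟩, rfl⟩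
    · intro i j hij
      by_cases hi : i = ⟨0, hk⟩ <;> by_cases hj : j = ⟨0, hk⟩ <;>
        simp_all [Finset.disjoint_left]
    · ext x
      simp only [Finset.mem_biUnion, Finset.mem_univ, true_and]
      constructor
      · rintro ⟨j, hj⟩
        by_cases h : j = ⟨0, hk⟩ <;> simp_all
      · intro hx
        exact ⟨⟨0, hk⟩, by simp [hx]⟩
  have hbound : ∀ m ∈ { m : ℝ | ∃ T : Fin k → Finset E, IsPartitionOf T S ∧ m = ⨆ j : Fin k, c (T j) },
      c S / (k : ℝ) ≤ m := by
    rintro m ⟨T, ⟨hdisj, hun⟩, rfl⟩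
    haveI : Nonempty (Fin k) := ⟨⟨0, hk⟩⟩
    have hb : BddAbove (Set.range fun j : Fin k => c (T j)) :=
      Set.Finite.bddAbove (Set.finite_range _)
    have h1 : c S ≤ ∑ j : Fin k, c (T j) := by
      rw [← hun]; exact cost_biUnion_le c hm.2.1 hs _ _
    have h2 : ∑ j : Fin k, c (T j) ≤ (k : ℝ) * ⨆ j : Fin k, c (T j) := by
      calc ∑ j : Fin k, c (T j) ≤ ∑ _j : Fin k, ⨆ j : Fin k, c (T j) :=
            Finset.sum_le_sum fun j _ => le_ciSup hb j
        _ = (k : ℝ) * ⨆ j : Fin k, c (T j) := by simp [mul_comm]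
    rw [div_le_iff₀ (by positivity)]
    calc c S ≤ (k : ℝ) * ⨆ j : Fin k, c (T j) := h1.trans h2
      _ = (⨆ j : Fin k, c (T j)) * k := mul_comm _ _
  have := le_csInf hne hbound
  rw [div_le_iff₀ (by positivity)] at this
  calc c S ≤ MMS c k S * k := this
    _ = (k : ℝ) * MMS c k S := mul_comm _ _

/-- Lemma 3.2: with monotone subadditive cost functions, any allocation is
2-PMMS and `n`-MMS. -/
theorem any_allocation_is_two_PMMS_and_n_MMS {E : Type*} [DecidableEq E] [Fintype E]
    {n : ℕ} (hn : 2 ≤ n) (c : Fin n → Finset E → ℝ)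
    (hmono : ∀ i, MonotoneCost (c i)) (hsub : ∀ i, SubadditiveCost (c i))
    (A : Fin n → Finset E) (hA : IsAllocation A) :
    IsPMMS 2 c A ∧ IsMMSFair (n : ℝ) c A := by
  constructor
  · intro i j hij
    have h1 : c i (A i) ≤ c i (A i ∪ A j) := (hmono i).2.2 Finset.subset_union_left
    have h2 := cost_le_mul_MMS (c i) (hmono i) (hsub i) 2 (by norm_num) (A i ∪ A j)
    push_cast at h2
    linarith
  · intro i
    have h1 : c i (A i) ≤ c i Finset.univ := (hmono i).2.2 (Finset.subset_univ _)
    exact h1.trans (cost_le_mul_MMS (c i) (hmono i) (hsub i) n (by omega) Finset.univ)
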